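/- (Corollary 1, off-sample case.) Let x_1,…,x_N ∈ ℝ^d be pairwise distinct, let z ∈ ℝ^N, and let h : ℝ → ℝ be continuous at 0 and at 1 with h(1) ≠ h(0) and (N−1)h(0) + h(1) ≠ 0. For δ > 0 define K_δ ∈ ℝ^{N×N} by (K_δ)_{ij} = h(exp(−δ²‖x_i − x_j‖²)), and for δ with K_δ invertible define Φ_δ(x) = ∑_{i=1}^{N} (K_δ^{-1}z)_i · h(exp(−δ²‖x − x_i‖²)). Then for every x ∈ ℝ^d with x ∉ {x_1,…,x_N}, lim_{δ→∞} Φ_δ(x) = h(0)·(∑_{i=1}^{N} z_i) / ((N−1)h(0) + h(1)). In particular, the limiting prediction at every point outside the training set is the same constant, independent of x. -/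

import Mathlib

open Filter
open scoped Matrix

private lemma exp_limit {c : ℝ} (hc : 0 < c) :
    Tendsto (fun δ : ℝ => Real.exp (-δ ^ 2 * c)) atTop (nhds 0) := by
  have h1 : Tendsto (fun δ : ℝ => δ ^ 2 * c) atTop atTop :=
    (tendsto_pow_atTop two_ne_zero).atTop_mul_const hc
  have h2 : Tendsto (fun δ : ℝ => -δ ^ 2 * c) atTop atBot := by
    simpa [neg_mul] using h1
  exact Real.tendsto_exp_atBot.comp h2

/-- Corollary 1, off-sample case: for every point `y` outside the training set, the kernel
regression predictor `Φ_δ(y) = ∑ i, (K_δ⁻¹ z) i * h(exp(−δ²‖y − xᵢ‖²))` with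
`(K_δ)_{ij} = h(exp(−δ²‖xᵢ − xⱼ‖²))` converges, as `δ → ∞`, to the constant
`h 0 · (∑ i, z i) / ((N−1)·h 0 + h 1)`, independent of `y`. -/
theorem ntk_regression_off_sample {d N : ℕ}
    (x : Fin N → EuclideanSpace ℝ (Fin d)) (hx : Function.Injective x)
    (z : Fin N → ℝ)
    (h : ℝ → ℝ) (h0 : ContinuousAt h 0) (h1 : ContinuousAt h 1)
    (hne : h 1 ≠ h 0) (hsum : ((N : ℝ) - 1) * h 0 + h 1 ≠ 0)
    (K : ℝ → Matrix (Fin N) (Fin N) ℝ)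
    (hK : ∀ δ i j, K δ i j = h (Real.exp (-δ ^ 2 * ‖x i - x j‖ ^ 2)))
    (Φ : ℝ → EuclideanSpace ℝ (Fin d) → ℝ)
    (hΦ : ∀ δ y, Φ δ y = ∑ i, ((K δ)⁻¹ *ᵥ z) i * h (Real.exp (-δ ^ 2 * ‖y - x i‖ ^ 2))) :
    ∀ y : EuclideanSpace ℝ (Fin d), (∀ i, y ≠ x i) →
      Tendsto (fun δ : ℝ => Φ δ y) atTop
        (nhds (h 0 * (∑ i, z i) / (((N : ℝ) - 1) * h 0 + h 1))) := by
  intro y hy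
  set c : ℝ := ((N : ℝ) - 1) * h 0 + h 1 with hc_def
  have ha : h 1 - h 0 ≠ 0 := sub_ne_zero.2 hne
  set a : ℝ := (h 1 - h 0)⁻¹ with ha_def
  set b : ℝ := -(h 0 * a) / c with hb_def
  set L : Matrix (Fin N) (Fin N) ℝ :=
    Matrix.of (fun i j => if i = j then h 1 else h 0) with hL_def
  set M : Matrix (Fin N) (Fin N) ℝ :=
    Matrix.of (fun i j => b + if i = j then a else 0) with hM_def
  -- L * M = 1
  have hLM : L * M = 1 := by
    ext i j
    simp only [Matrix.mul_apply, hL_def, hM_def, Matrix.of_apply, Matrix.one_apply]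
    have hrw : ∀ k : Fin N, (if i = k then h 1 else h 0) * (b + if k = j then a else 0)
        = (h 0 * b + if i = k then (h 1 - h 0) * b else 0)
          + (if k = j then (if i = k then h 1 else h 0) * a else 0) := by
      intro k
      split_ifs <;> ring
    rw [Finset.sum_congr rfl fun k _ => hrw k, Finset.sum_add_distrib,
      Finset.sum_add_distrib, Finset.sum_const, Finset.sum_ite_eq, Finset.sum_ite_eq']
    simp only [Finset.mem_univ, if_true, Finset.card_univ, Fintype.card_fin, nsmul_eq_mul]
    have hNpos : (1 : ℝ) ≤ (N : ℝ) := by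
      have : 0 < N := Fin.pos i
      exact_mod_cast this
    by_cases hij : i = j
    · simp only [hij, if_pos rfl, if_true]
      rw [hb_def, ha_def]
      field_simp
      ring
    · simp only [if_neg hij]
      rw [hb_def, ha_def]
      field_simp
      ring
  have hdet : IsUnit L.det := Matrix.isUnit_det_of_right_inverse hLM
  have hLinv : L⁻¹ = M := Matrix.inv_eq_right_inv hLM
  -- K δ → L
  have hKlim : Tendsto K atTop (nhds L) := by
    refine tendsto_pi_nhds.2 ?_
    intro i
    refine tendsto_pi_nhds.2 ?_
    intro j
    by_cases hij : i = j
    · subst hij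
      have : ∀ δ : ℝ, K δ i i = h 1 := by
        intro δ; rw [hK]; simp
      simp only [this, hL_def, Matrix.of_apply, if_pos rfl]
      exact tendsto_const_nhds
    · have hns : 0 < ‖x i - x j‖ ^ 2 := by
        have : x i - x j ≠ 0 := sub_ne_zero.2 (fun e => hij (hx e))
        exact pow_pos (norm_pos_iff.mpr this) 2
      have : Tendsto (fun δ : ℝ => K δ i j) atTop (nhds (h 0)) := by
        simp only [hK]
        exact h0.tendsto.comp (exp_limit hns)
      simpa [hL_def, hij] using this
  -- K δ ⁻¹ → M
  have hKinv : Tendsto (fun δ => (K δ)⁻¹) atTop (nhds M) := by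
    have hcont : ContinuousAt Inv.inv L := by
      apply continuousAt_matrix_inv
      have := NormedRing.inverse_continuousAt hdet.unit
      rwa [hdet.unit_spec] at this
    have := hcont.tendsto.comp hKlim
    rwa [hLinv] at this
  have hKinv' : ∀ i j, Tendsto (fun δ => (K δ)⁻¹ i j) atTop (nhds (M i j)) := by
    intro i j
    exact (tendsto_pi_nhds.1 (tendsto_pi_nhds.1 hKinv i) j)
  -- the h-factors converge to h 0
  have hvlim : ∀ i, Tendsto (fun δ : ℝ => h (Real.exp (-δ ^ 2 * ‖y - x i‖ ^ 2)))
      atTop (nhds (h 0)) := by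
    intro i
    have hns : 0 < ‖y - x i‖ ^ 2 := by
      have : y - x i ≠ 0 := sub_ne_zero.2 (hy i)
      exact pow_pos (norm_pos_iff.mpr this) 2
    exact h0.tendsto.comp (exp_limit hns)
  -- combine
  have hmain : Tendsto (fun δ : ℝ => Φ δ y) atTop (nhds (∑ i, (M *ᵥ z) i * h 0)) := by
    simp only [hΦ]
    apply tendsto_finset_sum
    intro i _
    apply Tendsto.mul _ (hvlim i)
    simp only [Matrix.mulVec, dotProduct]
    exact tendsto_finset_sum _ fun j _ => (hKinv' i j).mul_const (z j)
  convert hmain using 2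
  -- value computation
  have hcol : ∀ j : Fin N, (∑ i, M i j) = (N : ℝ) * b + a := by
    intro j
    simp only [hM_def, Matrix.of_apply]
    rw [Finset.sum_add_distrib, Finset.sum_const, Finset.sum_ite_eq']
    simp
  calc h 0 * (∑ i, z i) / c = (∑ j, ((N : ℝ) * b + a) * z j) * h 0 := by
        rw [← Finset.mul_sum]
        have hna : (N : ℝ) * b + a = c⁻¹ := by
          rw [hb_def, ha_def]
          field_simp
          ring
        rw [hna]
        field_simp
    _ = ∑ i, (M *ᵥ z) i * h 0 := by
        simp only [Matrix.mulVec, dotProduct]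
        simp only [Finset.sum_mul]
        rw [Finset.sum_comm]
        refine Finset.sum_congr rfl fun j _ => ?_
        rw [← Finset.sum_mul, ← Finset.sum_mul, hcol j]
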